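/- For any ring R and any R-module M, the flat dimension of M equals the injective dimension of its character module M⁺ = Hom_ℤ(M, ℚ/ℤ). -/

import Mathlib

open TensorProduct

universe u

section NCTensor
variable (R : Type u) [Ring R]

/-- Generators of the defect submodule used to define the tensor product of a right
`R`-module `N` and a left `R`-module `M` over a (possibly noncommutative) ring `R`. -/
def NCRel (N M : Type u) [AddCommGroup N] [Module Rᵐᵒᵖ N] [AddCommGroup M] [Module R M] :
    Submodule ℤ (N ⊗[ℤ] M) :=
  Submodule.span ℤ { t | ∃ (n : N) (r : R) (m : M),
    t = (MulOpposite.op r • n) ⊗ₜ[ℤ] m - n ⊗ₜ[ℤ] (r • m) }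

/-- The tensor product `N ⊗_R M` of a right `R`-module and a left `R`-module, as an
abelian group. -/
def NCTensor (N M : Type u) [AddCommGroup N] [Module Rᵐᵒᵖ N] [AddCommGroup M] [Module R M] :
    Type u :=
  (N ⊗[ℤ] M) ⧸ NCRel R N M

noncomputable instance (N M : Type u) [AddCommGroup N] [Module Rᵐᵒᵖ N] [AddCommGroup M] [Module R M] :
    AddCommGroup (NCTensor R N M) :=
  inferInstanceAs (AddCommGroup ((N ⊗[ℤ] M) ⧸ NCRel R N M))

noncomputable instance (N M : Type u) [AddCommGroup N] [Module Rᵐᵒᵖ N] [AddCommGroup M] [Module R M] :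
    Module ℤ (NCTensor R N M) :=
  inferInstanceAs (Module ℤ ((N ⊗[ℤ] M) ⧸ NCRel R N M))

/-- The map `I ⊗_R M → I ⊗_R M'` induced by a map `M →ₗ[R] M'` of left modules. -/
noncomputable def NCmap (N : Type u) [AddCommGroup N] [Module Rᵐᵒᵖ N] {M M' : Type u} [AddCommGroup M]
    [Module R M] [AddCommGroup M'] [Module R M'] (f : M →ₗ[R] M') :
    NCTensor R N M →ₗ[ℤ] NCTensor R N M' :=
  Submodule.mapQ _ _ (LinearMap.lTensor N (f.restrictScalars ℤ)) <| by
    rw [NCRel, Submodule.span_le]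
    rintro t ⟨n, r, m, rfl⟩
    refine Submodule.mem_comap.mpr (Submodule.subset_span ?_)
    refine ⟨n, r, f m, ?_⟩
    show LinearMap.lTensor N (f.restrictScalars ℤ) ((MulOpposite.op r • n) ⊗ₜ[ℤ] m - n ⊗ₜ[ℤ] (r • m)) = _
    simp [LinearMap.lTensor_tmul, map_sub, LinearMap.map_smul]

/-- The map `N ⊗_R M → N' ⊗_R M` induced by a map `N →ₗ[Rᵐᵒᵖ] N'` of right modules. -/
noncomputable def NCmapL (R : Type u) [Ring R] {N N' : Type u} [AddCommGroup N]
    [Module Rᵐᵒᵖ N] [AddCommGroup N'] [Module Rᵐᵒᵖ N'] (M : Type u) [AddCommGroup M]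
    [Module R M] (f : N →ₗ[Rᵐᵒᵖ] N') :
    NCTensor R N M →ₗ[ℤ] NCTensor R N' M :=
  Submodule.mapQ _ _ (LinearMap.rTensor M f.toAddMonoidHom.toIntLinearMap) <| by
    rw [NCRel, Submodule.span_le]
    rintro t ⟨n, r, m, rfl⟩
    refine Submodule.mem_comap.mpr (Submodule.subset_span ?_)
    refine ⟨f n, r, m, ?_⟩
    show LinearMap.rTensor M f.toAddMonoidHom.toIntLinearMap ((MulOpposite.op r • n) ⊗ₜ[ℤ] m - n ⊗ₜ[ℤ] (r • m)) = _
    simp [LinearMap.rTensor_tmul, map_sub, LinearMap.map_smul]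

/-- A left `R`-module `M` (over a possibly noncommutative ring) is flat if tensoring with
`M` preserves injectivity of maps of right `R`-modules. -/
def FlatModule (R : Type u) [Ring R] (M : Type u) [AddCommGroup M] [Module R M] : Prop :=
  ∀ (N N' : Type u) [AddCommGroup N] [Module Rᵐᵒᵖ N] [AddCommGroup N'] [Module Rᵐᵒᵖ N']
    (f : N →ₗ[Rᵐᵒᵖ] N'), Function.Injective f → Function.Injective (NCmapL R M f)

end NCTensor
section GDefs
variable (R : Type u) [Ring R]

/-- A complete flat resolution witnessing that `M` is a Gorenstein flat left `R`-module:
an exact sequence `⋯ → F₂ → F₁ → F₀ → F₋₁ → ⋯` of flat left `R`-modules with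
`M ≅ Im(F₀ → F₋₁)` which stays exact after applying `I ⊗_R -` for every injective right
`R`-module `I`. -/
structure CompleteFlatResolution (M : Type u) [AddCommGroup M] [Module R M] :
    Type (u + 1) where
  F : ℤ → ModuleCat.{u} R
  d : ∀ z : ℤ, F (z + 1) →ₗ[R] F z
  flat : ∀ z, FlatModule R (F z)
  exact : ∀ z, Function.Exact (d (z + 1)) (d z)
  iso : Nonempty (M ≃ₗ[R] LinearMap.range (d (-1)))
  tensorExact : ∀ (I : Type u) [AddCommGroup I] [Module Rᵐᵒᵖ I], Module.Injective Rᵐᵒᵖ I →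
    ∀ z, Function.Exact (NCmap R I (d (z + 1))) (NCmap R I (d z))

/-- A left `R`-module is Gorenstein flat if it admits a complete flat resolution. -/
def IsGorensteinFlat (M : Type u) [AddCommGroup M] [Module R M] : Prop :=
  Nonempty (CompleteFlatResolution R M)

/-- A complete projective resolution witnessing that `M` is a Gorenstein projective left
`R`-module. -/
structure CompleteProjResolution (M : Type u) [AddCommGroup M] [Module R M] :
    Type (u + 1) where
  P : ℤ → ModuleCat.{u} R
  d : ∀ z : ℤ, P (z + 1) →ₗ[R] P z
  proj : ∀ z, Module.Projective R (P z)
  exact : ∀ z, Function.Exact (d (z + 1)) (d z)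
  iso : Nonempty (M ≃ₗ[R] LinearMap.range (d (-1)))
  homExact : ∀ (Q : Type u) [AddCommGroup Q] [Module R Q], Module.Projective R Q →
    ∀ z, Function.Exact (fun g : P z →ₗ[R] Q => g.comp (d z))
      (fun g : P (z + 1) →ₗ[R] Q => g.comp (d (z + 1)))

/-- A left `R`-module is Gorenstein projective if it admits a complete projective
resolution. -/
def IsGorensteinProjective (M : Type u) [AddCommGroup M] [Module R M] : Prop :=
  Nonempty (CompleteProjResolution R M)

/-- `gfdLE R n M` : the Gorenstein flat dimension of the left `R`-module `M` is at most
`n`, i.e. `M` has a resolution of length `n` by Gorenstein flat modules. -/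
def gfdLE : ℕ → ModuleCat.{u} R → Prop
  | 0, M => IsGorensteinFlat R M
  | n + 1, M => ∃ (G : ModuleCat.{u} R) (f : G →ₗ[R] M), Function.Surjective f ∧
      IsGorensteinFlat R G ∧ gfdLE n (ModuleCat.of R (LinearMap.ker f))

/-- `gpdLE R n M` : the Gorenstein projective dimension of `M` is at most `n`. -/
def gpdLE : ℕ → ModuleCat.{u} R → Prop
  | 0, M => IsGorensteinProjective R M
  | n + 1, M => ∃ (G : ModuleCat.{u} R) (f : G →ₗ[R] M), Function.Surjective f ∧
      IsGorensteinProjective R G ∧ gpdLE n (ModuleCat.of R (LinearMap.ker f))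

/-- `fdLE R n M` : the flat dimension of `M` is at most `n`. -/
def fdLE : ℕ → ModuleCat.{u} R → Prop
  | 0, M => FlatModule R M
  | n + 1, M => ∃ (G : ModuleCat.{u} R) (f : G →ₗ[R] M), Function.Surjective f ∧
      FlatModule R G ∧ fdLE n (ModuleCat.of R (LinearMap.ker f))

/-- `pdLE R n M` : the projective dimension of `M` is at most `n`. -/
def pdLE : ℕ → ModuleCat.{u} R → Prop
  | 0, M => Module.Projective R M
  | n + 1, M => ∃ (G : ModuleCat.{u} R) (f : G →ₗ[R] M), Function.Surjective f ∧
      Module.Projective R G ∧ pdLE n (ModuleCat.of R (LinearMap.ker f))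

/-- `idLE R n M` : the injective dimension of `M` is at most `n`. -/
def idLE : ℕ → ModuleCat.{u} R → Prop
  | 0, M => Module.Injective R M
  | n + 1, M => ∃ (I : ModuleCat.{u} R) (f : M →ₗ[R] I), Function.Injective f ∧
      Module.Injective R I ∧ idLE n (ModuleCat.of R (I ⧸ LinearMap.range f))

/-- Gorenstein flat dimension, valued in `ℕ∞`. -/
noncomputable def gfDim (M : ModuleCat.{u} R) : ℕ∞ :=
  sInf {n : ℕ∞ | ∃ k : ℕ, n = k ∧ gfdLE R k M}

/-- Flat dimension, valued in `ℕ∞`. -/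
noncomputable def flatDim (M : ModuleCat.{u} R) : ℕ∞ :=
  sInf {n : ℕ∞ | ∃ k : ℕ, n = k ∧ fdLE R k M}

/-- Injective dimension, valued in `ℕ∞`. -/
noncomputable def injDim (M : ModuleCat.{u} R) : ℕ∞ :=
  sInf {n : ℕ∞ | ∃ k : ℕ, n = k ∧ idLE R k M}

/-- The (left) weak Gorenstein global dimension of `R`:
the supremum of Gorenstein flat dimensions of all left `R`-modules. -/
noncomputable def wGgldim : ℕ∞ :=
  ⨆ M : ModuleCat.{u} R, gfDim R M

/-- `IFD R` : the supremum of flat dimensions of injective left `R`-modules. -/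
noncomputable def IFD : ℕ∞ :=
  ⨆ M : ModuleCat.{u} R, ⨆ (_ : Module.Injective R M), flatDim R M

/-- A ring is left coherent if every finitely generated left ideal is finitely
presented. -/
def LeftCoherent : Prop :=
  ∀ I : Submodule R R, I.FG → Module.FinitePresentation R I

/-- A ring is right coherent if every finitely generated right ideal is finitely
presented; right ideals are viewed as left ideals of `Rᵐᵒᵖ`. -/
def RightCoherent : Prop := LeftCoherent Rᵐᵒᵖ

end GDefs

/-- `TorVanishGT R n I M` : `Tor_i^R(I, M) = 0` for all `i > n`, expressed by saying that
for every projective resolution `P• → M` of left modules, the complex `I ⊗_R P•` obtained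
by tensoring with the right module `I` is exact at every spot of index `> n`. -/
noncomputable def TorVanishGT (R : Type u) [Ring R] (n : ℕ) (I : Type u) [AddCommGroup I]
    [Module Rᵐᵒᵖ I] (M : ModuleCat.{u} R) : Prop :=
  ∀ (P : ℕ → ModuleCat.{u} R) (d : ∀ i, P (i + 1) →ₗ[R] P i) (ε : P 0 →ₗ[R] M),
    (∀ i, Module.Projective R (P i)) → Function.Surjective ε →
    Function.Exact (d 0) ε → (∀ i, Function.Exact (d (i + 1)) (d i)) →
    ∀ j, n ≤ j → Function.Exact (NCmap R I (d (j + 1))) (NCmap R I (d j))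
/-- The character module `M⁺ = Hom_ℤ(M, ℚ/ℤ)` of a left `R`-module is a right
`R`-module. -/
noncomputable instance charRightModule (R : Type u) [Ring R] (A : Type u) [AddCommGroup A]
    [Module R A] : Module Rᵐᵒᵖ (CharacterModule A) :=
  inferInstanceAs (Module Rᵈᵐᵃ (A →+ AddCircle (1 : ℚ)))

section AuxIdLE
variable {S : Type u} [Ring S]

/-- If `ι` is a split injection with retraction `ρ` and cokernel `p`, then `X ≃ A × C`. -/
noncomputable def splitEquiv {A X C : Type u} [AddCommGroup A] [Module S A] [AddCommGroup X]
    [Module S X] [AddCommGroup C] [Module S C] (ι : A →ₗ[S] X) (p : X →ₗ[S] C) (ρ : X →ₗ[S] A)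
    (hρ : ∀ a, ρ (ι a) = a) (hker : LinearMap.ker p = LinearMap.range ι)
    (hsurj : Function.Surjective p) : X ≃ₗ[S] A × C := by
  refine LinearEquiv.ofBijective (LinearMap.prod ρ p) ⟨fun x y hxy => ?_, fun z => ?_⟩
  · obtain ⟨hρ1, hp1⟩ := Prod.mk.injEq .. ▸ hxy
    have hx : x - y ∈ LinearMap.ker p := by simp [LinearMap.mem_ker, map_sub, hp1]
    rw [hker] at hx
    obtain ⟨a, ha⟩ := hx
    have ha0 : a = 0 := by
      have h2 := congrArg ρ ha
      rw [hρ, map_sub, hρ1, sub_self] at h2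
      exact h2
    rw [ha0, map_zero] at ha
    exact sub_eq_zero.mp ha.symm
  · obtain ⟨a, c⟩ := z
    obtain ⟨x, hx⟩ := hsurj c
    refine ⟨x + ι (a - ρ x), ?_⟩
    have hpι : ∀ b, p (ι b) = 0 :=
      fun b => LinearMap.mem_ker.mp (hker.symm ▸ LinearMap.mem_range_self ι b)
    simp [LinearMap.prod_apply, map_add, hρ, hx, hpι, Prod.ext_iff]

lemma injective_of_equiv {A B : Type u} [AddCommGroup A] [Module S A] [AddCommGroup B]
    [Module S B] (e : A ≃ₗ[S] B) (hA : Module.Injective S A) : Module.Injective S B := by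
  constructor
  intro X Y _ _ _ _ f hf g
  obtain ⟨h, hh⟩ := hA.out f hf ((e.symm : B →ₗ[S] _).comp g)
  exact ⟨(e : A →ₗ[S] B).comp h, fun x => by simp [hh x]⟩

lemma injective_prod {A B : Type u} [AddCommGroup A] [Module S A] [AddCommGroup B]
    [Module S B] (hA : Module.Injective S A) (hB : Module.Injective S B) :
    Module.Injective S (A × B) := by
  constructor
  intro X Y _ _ _ _ f hf g
  obtain ⟨h1, hh1⟩ := hA.out f hf ((LinearMap.fst S A B).comp g)
  obtain ⟨h2, hh2⟩ := hB.out f hf ((LinearMap.snd S A B).comp g)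
  exact ⟨LinearMap.prod h1 h2, fun x => by simp [hh1 x, hh2 x, Prod.ext_iff]⟩

lemma injective_of_prod_left {A B : Type u} [AddCommGroup A] [Module S A] [AddCommGroup B]
    [Module S B] (hAB : Module.Injective S (A × B)) : Module.Injective S B := by
  constructor
  intro X Y _ _ _ _ f hf g
  obtain ⟨h, hh⟩ := hAB.out f hf ((LinearMap.inr S A B).comp g)
  exact ⟨(LinearMap.snd S A B).comp h, fun x => by simp [hh x]⟩

variable (S)

lemma idLE_congr : ∀ (n : ℕ) (M N : ModuleCat.{u} S) (_ : M ≃ₗ[S] N), idLE S n M → idLE S n N := by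
  intro n
  induction n with
  | zero =>
    intro M N e h
    exact injective_of_equiv e h
  | succ n ih =>
    rintro M N e ⟨I, f, hfinj, hI, h⟩
    refine ⟨I, f.comp (e.symm : N →ₗ[S] M), fun x y hxy => ?_, hI, ?_⟩
    · exact e.symm.injective (hfinj hxy)
    · have hr : LinearMap.range (f.comp (e.symm : N →ₗ[S] M)) = LinearMap.range f := by
        rw [LinearMap.range_comp, LinearEquiv.range, Submodule.map_top]
      exact ih _ _ (Submodule.quotEquivOfEq _ _ hr.symm) h

lemma idLE_prod_inj (J : Type u) [AddCommGroup J] [Module S J] (hJ : Module.Injective S J) :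
    ∀ (n : ℕ) (M : ModuleCat.{u} S), idLE S n M →
      idLE S n (ModuleCat.of S (J × M)) := by
  intro n
  induction n with
  | zero =>
    intro M h
    exact injective_prod hJ h
  | succ n ih =>
    rintro M ⟨I, f, hfinj, hI, h⟩
    refine ⟨ModuleCat.of S (J × I), LinearMap.prodMap LinearMap.id f,
      Function.Injective.prodMap (fun x y h => h) hfinj, injective_prod hJ hI, ?_⟩
    set g : (J × ↥M) →ₗ[S] (J × ↥I) := LinearMap.prodMap LinearMap.id f
    set p : (J × ↥I) →ₗ[S] (↥I ⧸ LinearMap.range f) :=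
      (Submodule.mkQ _).comp (LinearMap.snd S J I)
    have hps : Function.Surjective p :=
      (Submodule.mkQ_surjective _).comp (fun i => ⟨(0, i), rfl⟩)
    have hker : LinearMap.ker p = LinearMap.range g := by
      ext ⟨j, i⟩
      simp only [LinearMap.mem_ker, LinearMap.mem_range, LinearMap.comp_apply,
        LinearMap.snd_apply, Submodule.mkQ_apply, Submodule.Quotient.mk_eq_zero, p, g]
      constructor
      · rintro ⟨m, hm⟩
        exact ⟨(j, m), by simp [LinearMap.prodMap_apply, hm]⟩
      · rintro ⟨⟨j', m⟩, hm⟩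
        obtain ⟨h1, h2⟩ := Prod.mk.injEq .. ▸ hm
        exact ⟨m, h2⟩
    have e : (↥I ⧸ LinearMap.range f) ≃ₗ[S] ((J × ↥I) ⧸ LinearMap.range g) :=
      ((Submodule.quotEquivOfEq _ _ hker.symm) ≪≫ₗ
        (LinearMap.quotKerEquivOfSurjective p hps)).symm
    exact idLE_congr S n (ModuleCat.of S (↥I ⧸ LinearMap.range f)) _ e h

lemma idLE_summand (I : Type u) [AddCommGroup I] [Module S I] (hI : Module.Injective S I) :
    ∀ (n : ℕ) (D : Type u) [AddCommGroup D] [Module S D],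
      idLE S n (ModuleCat.of S (I × D)) → idLE S n (ModuleCat.of S D) := by
  intro n
  induction n with
  | zero =>
    intro D _ _ h
    exact injective_of_prod_left h
  | succ n ih =>
    rintro D _ _ ⟨E, u, huinj, hE, hQ⟩
    set v : D →ₗ[S] E := u.comp (LinearMap.inr S I D)
    have hvinj : Function.Injective v := fun x y hxy => by
      have := huinj hxy
      exact congrArg Prod.snd this
    refine ⟨E, v, hvinj, hE, ?_⟩
    -- build equiv (E ⧸ range v) ≃ I × (E ⧸ range u)
    set ι : I →ₗ[S] (↥E ⧸ LinearMap.range v) :=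
      (Submodule.mkQ _).comp (u.comp (LinearMap.inl S I D))
    have hιinj : Function.Injective ι := by
      intro x y hxy
      have hxy' : (u ((x : I), (0 : D)) : ↥E) - u (y, 0) ∈ LinearMap.range v :=
        (Submodule.Quotient.eq _).mp hxy
      obtain ⟨d, hd⟩ := hxy'
      have : u (x, 0) - u (y, 0) = u (0, d) := by
        simpa [v, LinearMap.comp_apply] using hd.symm
      rw [← map_sub] at this
      have h2 := huinj this
      have h3 := congrArg Prod.fst h2
      simpa using sub_eq_zero.mp (by simpa using h3)
    have hle : LinearMap.range v ≤ LinearMap.range u := by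
      rintro x ⟨d, rfl⟩; exact ⟨(0, d), rfl⟩
    set q : (↥E ⧸ LinearMap.range v) →ₗ[S] (↥E ⧸ LinearMap.range u) :=
      Submodule.liftQ _ (Submodule.mkQ _) (by
        intro x hx
        exact (Submodule.Quotient.mk_eq_zero _).mpr (hle hx))
    have hqs : Function.Surjective q := by
      intro x
      obtain ⟨e, rfl⟩ := Submodule.mkQ_surjective _ x
      exact ⟨Submodule.mkQ _ e, rfl⟩
    have hkerq : LinearMap.ker q = LinearMap.range ι := by
      ext x
      obtain ⟨e, rfl⟩ := Submodule.mkQ_surjective _ x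
      simp only [LinearMap.mem_ker, LinearMap.mem_range]
      constructor
      · intro hx
        have he : e ∈ LinearMap.range u := by
          have h0 : Submodule.Quotient.mk (p := LinearMap.range u) e = 0 := hx
          exact (Submodule.Quotient.mk_eq_zero _).mp h0
        obtain ⟨⟨x0, d0⟩, rfl⟩ := he
        refine ⟨x0, ?_⟩
        show Submodule.Quotient.mk (u (x0, 0)) = Submodule.Quotient.mk (u (x0, d0))
        rw [Submodule.Quotient.eq]
        refine ⟨-d0, ?_⟩
        show u ((0 : I), -d0) = u (x0, 0) - u (x0, d0)
        rw [← map_sub]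
        congr 1
        refine Prod.ext ?_ ?_
        · change (0 : I) = x0 - x0
          simp
        · change -d0 = 0 - d0
          simp
      · rintro ⟨x0, hx0⟩
        rw [← hx0]
        show Submodule.Quotient.mk (p := LinearMap.range u) (u (x0, 0)) = 0
        rw [Submodule.Quotient.mk_eq_zero]
        exact ⟨(x0, 0), rfl⟩
    obtain ⟨ρ, hρ⟩ := hI.out ι hιinj LinearMap.id
    have e1 := splitEquiv ι q ρ hρ hkerq hqs
    exact idLE_congr S n _ _ e1.symm (idLE_prod_inj S I hI n _ hQ)

end AuxIdLE

section AuxShift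
variable (S : Type u) [Ring S]

/-- If `idLE S (n+1) M` and `g : M ↪ J` with `J` injective, then the cokernel of `g`
satisfies `idLE S n`. -/
lemma idLE_shift (n : ℕ) (M : ModuleCat.{u} S) (J : Type u) [AddCommGroup J] [Module S J]
    (g : M →ₗ[S] J) (hg : Function.Injective g) (hJ : Module.Injective S J)
    (h : idLE S (n + 1) M) : idLE S n (ModuleCat.of S (J ⧸ LinearMap.range g)) := by
  obtain ⟨I, f, hf, hI, hC⟩ := h
  -- pushout X := (I × J) ⧸ range (f, -g)
  set w : ↥M →ₗ[S] (↥I × J) := LinearMap.prod f (-g)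
  set X := (↥I × J) ⧸ LinearMap.range w
  set ιI : ↥I →ₗ[S] X := (Submodule.mkQ _).comp (LinearMap.inl S (↥I) J)
  set ιJ : J →ₗ[S] X := (Submodule.mkQ _).comp (LinearMap.inr S (↥I) J)
  have hιJ : Function.Injective ιJ := by
    intro x y hxy
    have hxy' : ((0 : ↥I), x) - ((0 : ↥I), y) ∈ LinearMap.range w :=
      (Submodule.Quotient.eq _).mp hxy
    obtain ⟨m, hm⟩ := hxy'
    have h1 : f m = 0 := by
      have := congrArg Prod.fst hm
      simpa [w] using this
    have hm0 : m = 0 := hf (by simpa using h1)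
    rw [hm0, map_zero] at hm
    have := congrArg Prod.snd hm
    simpa [sub_eq_zero] using this.symm
  have hιI : Function.Injective ιI := by
    intro x y hxy
    have hxy' : ((x : ↥I), (0 : J)) - (y, 0) ∈ LinearMap.range w :=
      (Submodule.Quotient.eq _).mp hxy
    obtain ⟨m, hm⟩ := hxy'
    have h1 : g m = 0 := by
      have := congrArg Prod.snd hm
      simp only [w, LinearMap.prod_apply, Pi.prod, LinearMap.neg_apply] at this
      have h2 : -g m = (0 : J) - 0 := this
      simpa using h2
    have hm0 : m = 0 := hg (by simpa using h1)
    rw [hm0, map_zero] at hm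
    have := congrArg Prod.fst hm
    simpa [sub_eq_zero] using this.symm
  -- the two cokernel maps
  set pC : X →ₗ[S] (↥I ⧸ LinearMap.range f) :=
    Submodule.liftQ _ ((Submodule.mkQ _).comp (LinearMap.fst S (↥I) J)) (by
      rintro x ⟨m, rfl⟩
      simp only [LinearMap.mem_ker, LinearMap.comp_apply]
      show Submodule.Quotient.mk (f m) = 0
      rw [Submodule.Quotient.mk_eq_zero]
      exact ⟨m, rfl⟩)
  set pD : X →ₗ[S] (J ⧸ LinearMap.range g) :=
    Submodule.liftQ _ ((Submodule.mkQ _).comp (LinearMap.snd S (↥I) J)) (by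
      rintro x ⟨m, rfl⟩
      simp only [LinearMap.mem_ker, LinearMap.comp_apply]
      show Submodule.Quotient.mk (-g m) = 0
      rw [Submodule.Quotient.mk_eq_zero]
      exact ⟨-m, by simp⟩)
  have hpCs : Function.Surjective pC := by
    intro c
    obtain ⟨i, rfl⟩ := Submodule.mkQ_surjective _ c
    exact ⟨Submodule.Quotient.mk (i, 0), rfl⟩
  have hpDs : Function.Surjective pD := by
    intro c
    obtain ⟨j, rfl⟩ := Submodule.mkQ_surjective _ c
    exact ⟨Submodule.Quotient.mk (0, j), rfl⟩
  have hkerC : LinearMap.ker pC = LinearMap.range ιJ := by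
    ext x
    obtain ⟨⟨i, j⟩, rfl⟩ := Submodule.mkQ_surjective _ x
    simp only [LinearMap.mem_ker, LinearMap.mem_range]
    constructor
    · intro hx
      have h0 : Submodule.Quotient.mk (p := LinearMap.range f) i = 0 := hx
      rw [Submodule.Quotient.mk_eq_zero] at h0
      obtain ⟨m, rfl⟩ := h0
      refine ⟨j + g m, ?_⟩
      show Submodule.Quotient.mk ((0 : ↥I), j + g m) = Submodule.Quotient.mk (f m, j)
      rw [Submodule.Quotient.eq]
      refine ⟨-m, Prod.ext ?_ ?_⟩
      · show (f (-m) : ↥I) = (0 : ↥I) - f m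
        simp
      · show (-g (-m) : J) = (j + g m) - j
        simp
    · rintro ⟨j0, hj0⟩
      rw [← hj0]
      show Submodule.Quotient.mk (p := LinearMap.range f) (0 : ↥I) = 0
      simp
  have hkerD : LinearMap.ker pD = LinearMap.range ιI := by
    ext x
    obtain ⟨⟨i, j⟩, rfl⟩ := Submodule.mkQ_surjective _ x
    simp only [LinearMap.mem_ker, LinearMap.mem_range]
    constructor
    · intro hx
      have h0 : Submodule.Quotient.mk (p := LinearMap.range g) j = 0 := hx
      rw [Submodule.Quotient.mk_eq_zero] at h0
      obtain ⟨m, rfl⟩ := h0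
      refine ⟨i + f m, ?_⟩
      show Submodule.Quotient.mk ((i + f m : ↥I), (0 : J)) = Submodule.Quotient.mk (i, g m)
      rw [Submodule.Quotient.eq]
      refine ⟨m, Prod.ext ?_ ?_⟩
      · show (f m : ↥I) = (i + f m) - i
        simp
      · show (-g m : J) = (0 : J) - g m
        simp
    · rintro ⟨i0, hi0⟩
      rw [← hi0]
      show Submodule.Quotient.mk (p := LinearMap.range g) (0 : J) = 0
      simp
  obtain ⟨ρJ, hρJ⟩ := hJ.out ιJ hιJ LinearMap.id
  obtain ⟨ρI, hρI⟩ := hI.out ιI hιI LinearMap.id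
  have eJ := splitEquiv ιJ pC ρJ hρJ hkerC hpCs
  have eI := splitEquiv ιI pD ρI hρI hkerD hpDs
  -- idLE n C → idLE n (J × C) → idLE n X → idLE n (I × D) → idLE n D
  have h1 := idLE_prod_inj S J hJ n _ hC
  have h2 := idLE_congr S n _ (ModuleCat.of S X) eJ.symm h1
  have h3 := idLE_congr S n (ModuleCat.of S X) (ModuleCat.of S (↥I × (J ⧸ LinearMap.range g))) eI h2
  exact idLE_summand S (↥I) hI n _ h3

end AuxShift

section AuxChar
variable {R : Type u} [Ring R]

/-- Precomposition with `f : A →ₗ[R] B` gives an `Rᵐᵒᵖ`-linear map `B⁺ →ₗ A⁺`. -/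
noncomputable def charDual {A B : Type u} [AddCommGroup A] [Module R A] [AddCommGroup B]
    [Module R B] (f : A →ₗ[R] B) :
    CharacterModule B →ₗ[Rᵐᵒᵖ] CharacterModule A where
  toFun c := c.comp f.toAddMonoidHom
  map_add' c c' := rfl
  map_smul' r c := by
    refine AddMonoidHom.ext fun a => ?_
    exact (congrArg c (f.map_smul r.unop a)).symm

lemma charDual_apply {A B : Type u} [AddCommGroup A] [Module R A] [AddCommGroup B]
    [Module R B] (f : A →ₗ[R] B) (c : CharacterModule B) (a : A) :
    charDual f c a = c (f a) := rfl

lemma charDual_injective {A B : Type u} [AddCommGroup A] [Module R A] [AddCommGroup B]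
    [Module R B] (f : A →ₗ[R] B) (hf : Function.Surjective f) :
    Function.Injective (charDual (R := R) f) := by
  intro c c' h
  refine AddMonoidHom.ext fun b => ?_
  obtain ⟨a, rfl⟩ := hf b
  exact congrArg (fun (ψ : CharacterModule _) => ψ a) h

lemma charDual_surjective {A B : Type u} [AddCommGroup A] [Module R A] [AddCommGroup B]
    [Module R B] (f : A →ₗ[R] B) (hf : Function.Injective f) :
    Function.Surjective (charDual (R := R) f) := by
  intro c
  obtain ⟨c', hc'⟩ := CharacterModule.dual_surjective_of_injective
    (R := ℤ) (f.toAddMonoidHom.toIntLinearMap) hf c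
  exact ⟨c', by ext a; exact congrArg (fun (ψ : CharacterModule _) => ψ a) hc'⟩

/-- First isomorphism theorem form of dualizing a surjection:
`B⁺ ⧸ range (charDual f) ≃ (ker f)⁺` when `f : B → M` is surjective. -/
noncomputable def cokerCharDualEquiv {B M : Type u} [AddCommGroup B] [Module R B]
    [AddCommGroup M] [Module R M] (f : B →ₗ[R] M) (hf : Function.Surjective f) :
    (CharacterModule B ⧸ LinearMap.range (charDual (R := R) f)) ≃ₗ[Rᵐᵒᵖ]
      CharacterModule ↥(LinearMap.ker f) := by
  set res : CharacterModule B →ₗ[Rᵐᵒᵖ] CharacterModule ↥(LinearMap.ker f) :=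
    charDual (LinearMap.ker f).subtype
  have hres : Function.Surjective res :=
    charDual_surjective _ (Submodule.injective_subtype _)
  have hker : LinearMap.ker res = LinearMap.range (charDual (R := R) f) := by
    ext c
    simp only [LinearMap.mem_ker, LinearMap.mem_range]
    constructor
    · intro hc
      -- c vanishes on ker f, so factors through M
      have hv : ∀ a ∈ AddMonoidHom.ker f.toAddMonoidHom, c a = 0 := by
        intro a ha
        have : (⟨a, ha⟩ : LinearMap.ker f) = ⟨a, ha⟩ := rfl
        exact congrArg (fun (ψ : CharacterModule _) => ψ ⟨a, ha⟩) hc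
      set e2 := QuotientAddGroup.quotientKerEquivOfSurjective f.toAddMonoidHom hf
      set lft := QuotientAddGroup.lift (AddMonoidHom.ker f.toAddMonoidHom) c hv
      refine ⟨lft.comp (e2.symm : M →+ _), ?_⟩
      refine AddMonoidHom.ext fun b => ?_
      show lft (e2.symm (f b)) = c b
      have : e2.symm (f b) = QuotientAddGroup.mk b := by
        apply e2.injective
        rw [AddEquiv.apply_symm_apply]
        rfl
      rw [this]
      rfl
    · rintro ⟨c', rfl⟩
      refine AddMonoidHom.ext fun a => ?_
      show c' (f a.1) = 0
      have : f a.1 = 0 := a.2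
      rw [this, map_zero]
  exact (Submodule.quotEquivOfEq _ _ hker.symm) ≪≫ₗ
    (LinearMap.quotKerEquivOfSurjective res hres)

/-- `R⁺` is an injective right `R`-module. -/
lemma charR_injective : Module.Injective Rᵐᵒᵖ (CharacterModule R) := by
  constructor
  intro X Y _ _ _ _ i hi g
  set χX : X →+ AddCircle (1 : ℚ) :=
    { toFun := fun x => g x 1
      map_zero' := by
        show g 0 1 = 0
        rw [map_zero]; rfl
      map_add' := fun x y => by
        show g (x + y) 1 = g x 1 + g y 1
        rw [map_add]; rfl }
  obtain ⟨χY, hχY⟩ := CharacterModule.dual_surjective_of_injective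
    (R := ℤ) (i.toAddMonoidHom.toIntLinearMap) hi χX
  refine ⟨{ toFun := fun y =>
              { toFun := fun r => χY (MulOpposite.op r • y)
                map_zero' := by
                  show χY (MulOpposite.op (0 : R) • y) = 0
                  rw [show (MulOpposite.op (0 : R) : Rᵐᵒᵖ) = 0 from rfl, zero_smul, map_zero]
                map_add' := fun r s => by
                  show χY (MulOpposite.op (r + s) • y) =
                    χY (MulOpposite.op r • y) + χY (MulOpposite.op s • y)
                  rw [show (MulOpposite.op (r + s) : Rᵐᵒᵖ) =
                    MulOpposite.op r + MulOpposite.op s from rfl, add_smul, map_add] }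
            map_add' := fun y y' => by
              refine AddMonoidHom.ext fun r => ?_
              show χY (MulOpposite.op r • (y + y')) =
                χY (MulOpposite.op r • y) + χY (MulOpposite.op r • y')
              rw [smul_add, map_add]
            map_smul' := fun s y => by
              refine AddMonoidHom.ext fun r => ?_
              show χY (MulOpposite.op r • s • y) = χY (MulOpposite.op (s.unop * r) • y)
              rw [smul_smul]
              congr 1 }, fun x => ?_⟩
  refine AddMonoidHom.ext fun r => ?_
  show χY (MulOpposite.op r • i x) = g x r
  rw [← map_smul]
  have h1 : χY (i (MulOpposite.op r • x)) = χX (MulOpposite.op r • x) :=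
    congrArg (fun (ψ : CharacterModule _) => ψ (MulOpposite.op r • x)) hχY
  rw [h1]
  show g (MulOpposite.op r • x) 1 = g x r
  rw [map_smul]
  show g x (r • (1 : R)) = g x r
  rw [smul_eq_mul, mul_one]

lemma injective_pi {S : Type u} [Ring S] {ι : Type u} (Q : ι → Type u)
    [∀ i, AddCommGroup (Q i)] [∀ i, Module S (Q i)] (hQ : ∀ i, Module.Injective S (Q i)) :
    Module.Injective S (∀ i, Q i) := by
  constructor
  intro X Y _ _ _ _ f hf g
  have H : ∀ i : ι, ∃ h : Y →ₗ[S] Q i, ∀ x, h (f x) = (LinearMap.proj i).comp g x :=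
    fun i => (hQ i).out f hf ((LinearMap.proj i).comp g)
  choose h hh using H
  exact ⟨LinearMap.pi h, fun x => funext fun i => hh i x⟩

/-- The character module of a free module `ι →₀ R` is `Rᵐᵒᵖ`-linearly equivalent to a
product of copies of `R⁺`. -/
noncomputable def charFinsuppEquiv (ι : Type u) :
    CharacterModule (ι →₀ R) ≃ₗ[Rᵐᵒᵖ] (ι → CharacterModule R) := by
  refine
    { ((Finsupp.liftAddHom (α := ι) (M := R) (N := AddCircle (1 : ℚ))).symm :
        CharacterModule (ι →₀ R) ≃+ (ι → CharacterModule R)) with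
      map_smul' := fun r χ => ?_ }
  refine funext fun i => ?_
  refine AddMonoidHom.ext fun s => ?_
  show (Finsupp.liftAddHom (α := ι) (M := R) (N := AddCircle (1 : ℚ))).symm (r • χ) i s
    = ((Finsupp.liftAddHom (α := ι) (M := R) (N := AddCircle (1 : ℚ))).symm χ) i (r.unop • s)
  show χ (r.unop • Finsupp.single i s) = χ (Finsupp.single i (r.unop • s))
  rw [Finsupp.smul_single]

lemma charFinsupp_injective (ι : Type u) :
    Module.Injective Rᵐᵒᵖ (CharacterModule (ι →₀ R)) :=
  injective_of_equiv (charFinsuppEquiv (R := R) ι).symm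
    (injective_pi _ (fun _ => charR_injective))

end AuxChar

section AuxTensor
variable {R : Type u} [Ring R]

/-- The canonical quotient map onto `NCTensor`. -/
noncomputable def NCmk (N M : Type u) [AddCommGroup N] [Module Rᵐᵒᵖ N] [AddCommGroup M]
    [Module R M] : (N ⊗[ℤ] M) →ₗ[ℤ] NCTensor R N M :=
  Submodule.mkQ (NCRel R N M)

lemma NCmapL_mk {N N' M : Type u} [AddCommGroup N] [Module Rᵐᵒᵖ N] [AddCommGroup N']
    [Module Rᵐᵒᵖ N'] [AddCommGroup M] [Module R M] (f : N →ₗ[Rᵐᵒᵖ] N') (n : N) (m : M) :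
    NCmapL R M f (NCmk (R := R) N M (n ⊗ₜ[ℤ] m)) = NCmk (R := R) N' M (f n ⊗ₜ[ℤ] m) := by
  show Submodule.mapQ _ _ _ _ (Submodule.Quotient.mk _) = Submodule.Quotient.mk _
  rfl

/-- Characters of `NCTensor R N M` correspond to `Rᵐᵒᵖ`-linear maps `N → M⁺`:
the forward map. -/
noncomputable def toChar {N M : Type u} [AddCommGroup N] [Module Rᵐᵒᵖ N] [AddCommGroup M]
    [Module R M] (φ : N →ₗ[Rᵐᵒᵖ] CharacterModule M) :
    CharacterModule (NCTensor R N M) :=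
  ((NCRel R N M).liftQ
    (TensorProduct.lift
      { toFun := fun n => (φ n).toIntLinearMap
        map_add' := fun n n' => by
          refine LinearMap.ext fun m => ?_
          show φ (n + n') m = φ n m + φ n' m
          rw [map_add]
          rfl
        map_smul' := fun z n => by
          refine LinearMap.ext fun m => ?_
          show φ (z • n) m = z • (φ n m)
          rw [map_zsmul φ z n]
          rfl })
    (by
      rw [NCRel, Submodule.span_le]
      rintro t ⟨n, r, m, rfl⟩
      simp only [SetLike.mem_coe, LinearMap.mem_ker, map_sub, TensorProduct.lift.tmul]
      have h1 : φ (MulOpposite.op r • n) m = φ n (r • m) := by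
        rw [φ.map_smul]
        rfl
      exact LinearMap.mem_ker.mpr ((map_sub _ _ _).trans ((congrArg₂ (· - ·)
        (TensorProduct.lift.tmul _ _) (TensorProduct.lift.tmul _ _)).trans (sub_eq_zero.mpr h1))))).toAddMonoidHom

lemma toChar_mk {N M : Type u} [AddCommGroup N] [Module Rᵐᵒᵖ N] [AddCommGroup M]
    [Module R M] (φ : N →ₗ[Rᵐᵒᵖ] CharacterModule M) (n : N) (m : M) :
    toChar (R := R) φ (NCmk (R := R) N M (n ⊗ₜ[ℤ] m)) = φ n m := rfl

/-- Characters of `NCTensor R N M` correspond to `Rᵐᵒᵖ`-linear maps `N → M⁺`: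
the backward map. -/
noncomputable def ofChar {N M : Type u} [AddCommGroup N] [Module Rᵐᵒᵖ N] [AddCommGroup M]
    [Module R M] (χ : CharacterModule (NCTensor R N M)) :
    N →ₗ[Rᵐᵒᵖ] CharacterModule M where
  toFun n := χ.comp (((NCmk (R := R) N M).toAddMonoidHom).comp
    (TensorProduct.mk ℤ N M n).toAddMonoidHom)
  map_add' n n' := by
    refine AddMonoidHom.ext fun m => ?_
    show χ (NCmk (R := R) N M ((n + n') ⊗ₜ[ℤ] m)) =
      χ (NCmk (R := R) N M (n ⊗ₜ[ℤ] m)) + χ (NCmk (R := R) N M (n' ⊗ₜ[ℤ] m))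
    rw [TensorProduct.add_tmul, map_add, map_add]
  map_smul' r n := by
    refine AddMonoidHom.ext fun m => ?_
    show χ (NCmk (R := R) N M ((r • n) ⊗ₜ[ℤ] m)) = χ (NCmk (R := R) N M (n ⊗ₜ[ℤ] (r.unop • m)))
    congr 1
    show Submodule.Quotient.mk _ = Submodule.Quotient.mk _
    rw [Submodule.Quotient.eq]
    refine Submodule.subset_span ⟨n, r.unop, m, ?_⟩
    rw [MulOpposite.op_unop]

lemma ofChar_apply {N M : Type u} [AddCommGroup N] [Module Rᵐᵒᵖ N] [AddCommGroup M]
    [Module R M] (χ : CharacterModule (NCTensor R N M)) (n : N) (m : M) :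
    ofChar (R := R) χ n m = χ (NCmk (R := R) N M (n ⊗ₜ[ℤ] m)) := rfl

/-- Lambek: a flat module has injective character module. -/
lemma lambek_forward (M : Type u) [AddCommGroup M] [Module R M] (h : FlatModule R M) :
    Module.Injective Rᵐᵒᵖ (CharacterModule M) := by
  constructor
  intro X Y _ _ _ _ i hi g
  obtain ⟨χY, hχY⟩ := CharacterModule.dual_surjective_of_injective (R := ℤ)
    (NCmapL R M i) (h X Y i hi) (toChar (R := R) g)
  refine ⟨ofChar (R := R) χY, fun x => ?_⟩
  refine AddMonoidHom.ext fun m => ?_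
  show χY (NCmk (R := R) Y M (i x ⊗ₜ[ℤ] m)) = g x m
  rw [← NCmapL_mk (R := R) i x m]
  have h2 := congrArg (fun (ψ : CharacterModule (NCTensor R X M)) =>
    ψ (NCmk (R := R) X M (x ⊗ₜ[ℤ] m))) hχY
  exact h2.trans (toChar_mk (R := R) g x m)

/-- Lambek: a module with injective character module is flat. -/
lemma lambek_backward (M : Type u) [AddCommGroup M] [Module R M]
    (h : Module.Injective Rᵐᵒᵖ (CharacterModule M)) : FlatModule R M := by
  intro N N' _ _ _ _ f hf
  have hker : ∀ x, NCmapL R M f x = 0 → x = 0 := by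
    intro x hx
    by_contra hx0
    obtain ⟨χ, hχ⟩ := CharacterModule.exists_character_apply_ne_zero_of_ne_zero hx0
    obtain ⟨ψ, hψ⟩ := h.out f hf (ofChar (R := R) χ)
    have key : ∀ t, χ t = toChar (R := R) ψ (NCmapL R M f t) := by
      intro t
      obtain ⟨s, rfl⟩ := Submodule.mkQ_surjective _ t
      induction s using TensorProduct.induction_on with
      | zero =>
        show χ (NCmk (R := R) N M 0) = toChar (R := R) ψ (NCmapL R M f (NCmk (R := R) N M 0))
        rw [map_zero, map_zero, map_zero, map_zero]
      | tmul n m =>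
        show χ (NCmk (R := R) N M (n ⊗ₜ[ℤ] m)) =
          toChar (R := R) ψ (NCmapL R M f (NCmk (R := R) N M (n ⊗ₜ[ℤ] m)))
        rw [NCmapL_mk]
        show χ (NCmk (R := R) N M (n ⊗ₜ[ℤ] m)) = ψ (f n) m
        rw [hψ n]
        rfl
      | add a b ha hb =>
        show χ (NCmk (R := R) N M (a + b)) =
          toChar (R := R) ψ (NCmapL R M f (NCmk (R := R) N M (a + b)))
        rw [map_add, map_add, map_add, map_add]
        exact congrArg₂ (· + ·) ha hb
    have h3 := key x
    rw [hx, map_zero] at h3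
    exact hχ h3
  intro x y hxy
  have h4 : x - y = 0 := hker _ (by rw [map_sub, hxy, sub_self])
  exact sub_eq_zero.mp h4

end AuxTensor

section MainInduction
variable (R : Type u) [Ring R]

lemma fdLE_iff_idLE : ∀ (n : ℕ) (M : ModuleCat.{u} R),
    fdLE R n M ↔ idLE Rᵐᵒᵖ n (ModuleCat.of Rᵐᵒᵖ (CharacterModule M)) := by
  intro n
  induction n with
  | zero =>
    intro M
    exact ⟨fun h => lambek_forward (R := R) M h, fun h => lambek_backward (R := R) M h⟩
  | succ n ih =>
    intro M
    constructor
    · rintro ⟨G, f, hfs, hGflat, hk⟩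
      refine ⟨ModuleCat.of Rᵐᵒᵖ (CharacterModule G), charDual (R := R) f,
        charDual_injective f hfs, lambek_forward (R := R) G hGflat, ?_⟩
      have h1 := (ih (ModuleCat.of R (LinearMap.ker f))).mp hk
      exact idLE_congr Rᵐᵒᵖ n _ _ (cokerCharDualEquiv (R := R) f hfs).symm h1
    · intro h
      set F : Type u := (↥M →₀ R) with hF
      set π : F →ₗ[R] ↥M := Finsupp.linearCombination R (id : ↥M → ↥M) with hπdef
      have hπ : Function.Surjective π := Finsupp.linearCombination_id_surjective R ↥M
      refine ⟨ModuleCat.of R F, π, hπ,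
        lambek_backward (R := R) F (charFinsupp_injective (R := R) ↥M), ?_⟩
      have h2 := idLE_shift Rᵐᵒᵖ n (ModuleCat.of Rᵐᵒᵖ (CharacterModule ↥M))
        (CharacterModule F) (charDual (R := R) π) (charDual_injective π hπ)
        (charFinsupp_injective (R := R) ↥M) h
      have h3 := idLE_congr Rᵐᵒᵖ n
        (ModuleCat.of Rᵐᵒᵖ (CharacterModule F ⧸ LinearMap.range (charDual (R := R) π)))
        (ModuleCat.of Rᵐᵒᵖ (CharacterModule ↥(LinearMap.ker π)))
        (cokerCharDualEquiv (R := R) π hπ) h2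
      exact (ih (ModuleCat.of R (LinearMap.ker π))).mpr h3

end MainInduction

theorem flatDim_eq_injDim_char_aux (R : Type u) [Ring R] (M : ModuleCat.{u} R) :
    flatDim R M = injDim Rᵐᵒᵖ (ModuleCat.of Rᵐᵒᵖ (CharacterModule ↥M)) := by
  have h := fdLE_iff_idLE R
  unfold flatDim injDim
  congr 1
  ext n
  simp only [Set.mem_setOf_eq]
  constructor
  · rintro ⟨k, rfl, hk⟩
    exact ⟨k, rfl, (h k M).mp hk⟩
  · rintro ⟨k, rfl, hk⟩
    exact ⟨k, rfl, (h k M).mpr hk⟩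

/-- For any ring `R` and any left `R`-module `M`, the flat dimension of `M` equals the
injective dimension of its character module `M⁺ = Hom_ℤ(M, ℚ/ℤ)` as a right `R`-module. -/
theorem stmt17 (R : Type u) [Ring R] (M : ModuleCat.{u} R) :
    flatDim R M = injDim Rᵐᵒᵖ (ModuleCat.of Rᵐᵒᵖ (CharacterModule ↥M)) := by
  exact flatDim_eq_injDim_char_aux R M
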